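/- Let f : ℝ → ℝ be differentiable on all of ℝ, let x be a real number, and let h be a hyperreal. Then there exists a hyperreal θ with 0 ≤ θ and θ ≤ 1 such that f*(x + h) − f(x) = h · (deriv f)*(x + θ·h), where f* and (deriv f)* are the natural extensions of f and of its derivative. (This answers, in the hyperreal model, Felix Klein's challenge to prove the mean-value theorem f(x+h) − f(x) = h·f′(x+θh) with 0 ≤ θ ≤ 1 in a non-Archimedean system, in particular for infinitesimal increments h.) -/

import Mathlib

open Hyperreal

/-- The natural extension `f* : ℝ* → ℝ*` of `f : ℝ → ℝ`, given by `Filter.Germ.map f`. -/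
noncomputable def Hyperreal.extension (f : ℝ → ℝ) : ℝ* → ℝ* :=
  Filter.Germ.map f

theorem real_mvt_aux (f : ℝ → ℝ) (hf : Differentiable ℝ f) (x : ℝ) (t : ℝ) :
    ∃ θ : ℝ, 0 ≤ θ ∧ θ ≤ 1 ∧ f (x + t) - f x = t * deriv f (x + θ * t) := by
  rcases lt_trichotomy t 0 with ht | rfl | ht
  · obtain ⟨c, hc, hder⟩ := exists_deriv_eq_slope f (by linarith : x + t < x)
      (hf.continuous.continuousOn) (fun y _ => hf.differentiableAt.differentiableWithinAt)
    obtain ⟨hc1, hc2⟩ := hc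
    have htne : t ≠ 0 := ne_of_lt ht
    refine ⟨(c - x) / t, ?_, ?_, ?_⟩
    · rw [div_nonneg_iff]; right; constructor <;> linarith
    · rw [div_le_one_iff]; right; right; exact ⟨ht, by linarith⟩
    · have hc' : x + (c - x) / t * t = c := by field_simp; ring
      rw [hc', hder, show x - (x + t) = -t from by ring, div_neg, mul_neg,
        ← mul_div_assoc, mul_div_cancel_left₀ _ htne]
      ring
  · exact ⟨0, le_refl 0, zero_le_one, by simp⟩
  · obtain ⟨c, hc, hder⟩ := exists_deriv_eq_slope f (by linarith : x < x + t)
      (hf.continuous.continuousOn) (fun y _ => hf.differentiableAt.differentiableWithinAt)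
    obtain ⟨hc1, hc2⟩ := hc
    have htne : t ≠ 0 := ne_of_gt ht
    refine ⟨(c - x) / t, div_nonneg (by linarith) ht.le, by rw [div_le_one ht]; linarith, ?_⟩
    have hc' : x + (c - x) / t * t = c := by field_simp; ring
    rw [hc', hder, show x + t - x = t from by ring,
      ← mul_div_assoc, mul_div_cancel_left₀ _ htne]

/-- Klein's challenge in the hyperreal model: the mean value theorem
`f*(x + h) − f(x) = h · (f′)*(x + θ·h)` with `0 ≤ θ ≤ 1` holds for every
hyperreal increment `h` (in particular for infinitesimal `h`). -/
theorem hyperreal_mean_value (f : ℝ → ℝ) (hf : Differentiable ℝ f)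
    (x : ℝ) (h : ℝ*) :
    ∃ θ : ℝ*, 0 ≤ θ ∧ θ ≤ 1 ∧
      Hyperreal.extension f ((x : ℝ*) + h) - ((f x : ℝ) : ℝ*)
        = h * Hyperreal.extension (deriv f) ((x : ℝ*) + θ * h) := by
  classical
  set θfun : ℝ → ℝ := fun t => Classical.choose (real_mvt_aux f hf x t) with hθfun
  have hspec : ∀ t : ℝ, 0 ≤ θfun t ∧ θfun t ≤ 1 ∧
      f (x + t) - f x = t * deriv f (x + θfun t * t) :=
    fun t => Classical.choose_spec (real_mvt_aux f hf x t)
  obtain ⟨u, rfl⟩ := ofSeq_surjective h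
  refine ⟨ofSeq (fun n => θfun (u n)), ?_, ?_, ?_⟩
  · exact Filter.Germ.coe_nonneg.2 <| Filter.Eventually.of_forall fun n => (hspec (u n)).1
  · show ofSeq (fun n => θfun (u n)) ≤ ofSeq (fun _ => 1)
    exact Filter.Germ.coe_le.2 <| Filter.Eventually.of_forall fun n => (hspec (u n)).2.1
  · show ofSeq (fun n => f (x + u n) - f x)
      = ofSeq (fun n => u n * deriv f (x + θfun (u n) * u n))
    exact congrArg ofSeq <| funext fun n => (hspec (u n)).2.2
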